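/- In the setting of the Theorem 1 key inequality — X : Ω → Matrix (Fin d₁) (Fin d₂) ℝ square-integrable with E[X] = 0, Ỹ := 1{Y ∈ A₁} − 1{Y ∈ A₂} for disjoint measurable A₁, A₂, λ ≥ 0, L(u, v, t) := Var(uᵀXv) + λ·E[(1 − Ỹ(uᵀXv − t))₊], m := σ(ω ↦ UᵀX(ω)V), Y and X conditionally independent given m, and E[uᵀXv | m] = (Uη_r)ᵀX(Vη_c) a.s. for some η_r ∈ ℝ^{r₁}, η_c ∈ ℝ^{r₂} — assume additionally that E[(uᵀXv − E[uᵀXv | m])²] > 0. Then the inequality is strict: L(u, v, t) > L(Uη_r, Vη_c, t). -/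

import Mathlib

open MeasureTheory ProbabilityTheory Matrix

noncomputable section

instance {m n : Type*} : MeasurableSpace (Matrix m n ℝ) :=
  inferInstanceAs (MeasurableSpace (m → n → ℝ))

/-- The bilinear form `uᵀ M v = Σ_{i,j} uᵢ M_{ij} vⱼ`. -/
def bilin {d₁ d₂ : ℕ} (u : Fin d₁ → ℝ) (M : Matrix (Fin d₁) (Fin d₂) ℝ) (v : Fin d₂ → ℝ) : ℝ :=
  ∑ i, ∑ j, u i * M i j * v j

/-- The sliced response `Ỹ = 1{Y ∈ A₁} − 1{Y ∈ A₂}`. -/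
def sliceLabel {Ω : Type*} (A₁ A₂ : Set ℝ) (Y : Ω → ℝ) (ω : Ω) : ℝ :=
  A₁.indicator 1 (Y ω) - A₂.indicator 1 (Y ω)

/-- The population PSMM objective
`L(u, v, t) = Var(uᵀXv) + λ·E[(1 − Ỹ(uᵀXv − t))₊]`. -/
def PSMMobj {Ω : Type*} [MeasurableSpace Ω] {d₁ d₂ : ℕ} (μ : Measure Ω)
    (X : Ω → Matrix (Fin d₁) (Fin d₂) ℝ) (Ytil : Ω → ℝ) (lam : ℝ)
    (u : Fin d₁ → ℝ) (v : Fin d₂ → ℝ) (t : ℝ) : ℝ :=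
  variance (fun ω => bilin u (X ω) v) μ
    + lam * ∫ ω, max (1 - Ytil ω * (bilin u (X ω) v - t)) 0 ∂μ

/-- Conditional independence of `Y` and `X` given a sub-σ-algebra `m`:
for all bounded measurable `g, h`, `E[g(Y)h(X) | m] = E[g(Y)|mSig T] ⬝ E[h(X)|mSig T]` a.s. -/
def CondIndepBdd {Ω α : Type*} [MeasurableSpace Ω] [MeasurableSpace α]
    (μ : Measure Ω) (m : MeasurableSpace Ω) (Y : Ω → ℝ) (X : Ω → α) : Prop :=
  ∀ (g : ℝ → ℝ) (h : α → ℝ), Measurable g → Measurable h →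
    (∃ C, ∀ x, |g x| ≤ C) → (∃ C, ∀ x, |h x| ≤ C) →
    μ[fun ω => g (Y ω) * h (X ω) | m]
      =ᵐ[μ] fun ω => (μ[fun ω' => g (Y ω') | m]) ω * (μ[fun ω' => h (X ω') | m]) ω

/-- The σ-algebra generated by a map into matrices. -/
def mSig {Ω : Type*} {r₁ r₂ : ℕ} (T : Ω → Matrix (Fin r₁) (Fin r₂) ℝ) : MeasurableSpace Ω :=
  MeasurableSpace.comap T inferInstance

section Helpers

lemma bilin_dot {d₁ d₂ : ℕ} (u : Fin d₁ → ℝ) (M : Matrix (Fin d₁) (Fin d₂) ℝ) (v : Fin d₂ → ℝ) :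
    bilin u M v = u ⬝ᵥ M.mulVec v := by
  simp [bilin, dotProduct, Matrix.mulVec, Finset.mul_sum, mul_assoc]

lemma bilin_mulVec {d₁ d₂ r₁ r₂ : ℕ} (U : Matrix (Fin d₁) (Fin r₁) ℝ)
    (V : Matrix (Fin d₂) (Fin r₂) ℝ) (ηr : Fin r₁ → ℝ) (ηc : Fin r₂ → ℝ)
    (M : Matrix (Fin d₁) (Fin d₂) ℝ) :
    bilin (U.mulVec ηr) M (V.mulVec ηc) = bilin ηr (Uᵀ * M * V) ηc := by
  rw [bilin_dot, bilin_dot, Matrix.mulVec_mulVec, Matrix.dotProduct_mulVec,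
    ← Matrix.vecMul_transpose, Matrix.vecMul_vecMul, ← Matrix.dotProduct_mulVec,
    ← Matrix.mul_assoc]

lemma measurable_bilin {d₁ d₂ : ℕ} (u : Fin d₁ → ℝ) (v : Fin d₂ → ℝ) :
    Measurable (fun M : Matrix (Fin d₁) (Fin d₂) ℝ => bilin u M v) := by
  unfold bilin
  refine Finset.measurable_sum _ fun i _ => Finset.measurable_sum _ fun j _ => ?_
  have hentry : Measurable fun M : Matrix (Fin d₁) (Fin d₂) ℝ => M i j :=
    (measurable_pi_apply j).comp (measurable_pi_apply i)
  have : (fun M : Matrix (Fin d₁) (Fin d₂) ℝ => u i * M i j * v j)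
      = fun M => (u i * v j) * M i j := by funext M; ring
  rw [this]
  exact hentry.const_mul _

lemma measurable_conj {d₁ d₂ r₁ r₂ : ℕ} (U : Matrix (Fin d₁) (Fin r₁) ℝ)
    (V : Matrix (Fin d₂) (Fin r₂) ℝ) :
    Measurable (fun M : Matrix (Fin d₁) (Fin d₂) ℝ => Uᵀ * M * V) := by
  refine measurable_pi_lambda _ fun k => measurable_pi_lambda _ fun l => ?_
  simp only [Matrix.mul_apply, Matrix.transpose_apply]
  refine Finset.measurable_sum _ fun j _ => Measurable.mul_const ?_ _
  refine Finset.measurable_sum _ fun i _ => Measurable.const_mul ?_ _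
  exact (measurable_pi_apply j).comp (measurable_pi_apply i)

variable {Ω : Type*} [MeasurableSpace Ω] {μ : Measure Ω}

lemma memℒp2_integrable_mul {f g : Ω → ℝ} (hf : MemLp f 2 μ) (hg : MemLp g 2 μ) :
    Integrable (fun ω => f ω * g ω) μ := by
  refine Integrable.mono' (hf.integrable_sq.add hg.integrable_sq) (hf.1.mul hg.1) ?_
  refine Filter.Eventually.of_forall fun x => ?_
  simp only [Pi.add_apply, Real.norm_eq_abs, abs_mul]
  nlinarith [sq_nonneg (|f x| - |g x|), sq_abs (f x), sq_abs (g x), abs_nonneg (f x),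
    abs_nonneg (g x), mul_nonneg (abs_nonneg (f x)) (abs_nonneg (g x))]

lemma integrable_of_bdd {f : Ω → ℝ} [IsFiniteMeasure μ] {C : ℝ} (hf : Measurable f)
    (hC : ∀ ω, |f ω| ≤ C) : Integrable f μ :=
  Integrable.mono' (integrable_const C) hf.aestronglyMeasurable
    (Filter.Eventually.of_forall fun ω => by simpa [Real.norm_eq_abs] using hC ω)

lemma memℒp_bilin {d₁ d₂ : ℕ} {X : Ω → Matrix (Fin d₁) (Fin d₂) ℝ}
    (hXL2 : ∀ i j, MemLp (fun ω => X ω i j) 2 μ) (u : Fin d₁ → ℝ) (v : Fin d₂ → ℝ) :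
    MemLp (fun ω => bilin u (X ω) v) 2 μ := by
  unfold bilin
  refine memLp_finset_sum _ fun i _ => memLp_finset_sum _ fun j _ => ?_
  have : (fun ω => u i * X ω i j * v j) = fun ω => (u i * v j) * X ω i j := by funext ω; ring
  rw [this]
  exact (hXL2 i j).const_mul _

lemma integral_bilin {d₁ d₂ : ℕ} {X : Ω → Matrix (Fin d₁) (Fin d₂) ℝ} [IsFiniteMeasure μ]
    (hXL2 : ∀ i j, MemLp (fun ω => X ω i j) 2 μ)
    (hXmean : ∀ i j, ∫ ω, X ω i j ∂μ = 0) (u : Fin d₁ → ℝ) (v : Fin d₂ → ℝ) :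
    ∫ ω, bilin u (X ω) v ∂μ = 0 := by
  have hrw : ∀ i j, (fun ω => u i * X ω i j * v j) = fun ω => (u i * v j) * X ω i j := by
    intro i j; funext ω; ring
  have hint : ∀ (i : Fin d₁) (j : Fin d₂), Integrable (fun ω => u i * X ω i j * v j) μ := by
    intro i j; rw [hrw]
    exact ((hXL2 i j).integrable one_le_two).const_mul _
  unfold bilin
  rw [integral_finset_sum _ fun i _ => integrable_finset_sum _ fun j _ => hint i j]
  refine Finset.sum_eq_zero fun i _ => ?_
  rw [integral_finset_sum _ fun j _ => hint i j]
  refine Finset.sum_eq_zero fun j _ => ?_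
  rw [hrw, integral_const_mul, hXmean i j, mul_zero]

end Helpers

/-- **Strict version of the key inequality in Theorem 1.** If moreover
`E[(uᵀXv − E[uᵀXv | σ(UᵀXV)])²] > 0`, then `L(u,v,t) > L(Uη_r, Vη_c, t)`. -/
theorem stmt_7 {Ω : Type*} [MeasurableSpace Ω] {μ : Measure Ω} [IsProbabilityMeasure μ]
    {d₁ d₂ r₁ r₂ : ℕ}
    (X : Ω → Matrix (Fin d₁) (Fin d₂) ℝ) (hX : Measurable X)
    (hXL2 : ∀ i j, MemLp (fun ω => X ω i j) 2 μ)
    (hXmean : ∀ i j, ∫ ω, X ω i j ∂μ = 0)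
    (Y : Ω → ℝ) (hY : Measurable Y)
    (A₁ A₂ : Set ℝ) (hA₁ : MeasurableSet A₁) (hA₂ : MeasurableSet A₂)
    (hdisj : Disjoint A₁ A₂)
    (lam : ℝ) (hlam : 0 ≤ lam)
    (U : Matrix (Fin d₁) (Fin r₁) ℝ) (V : Matrix (Fin d₂) (Fin r₂) ℝ)
    (u : Fin d₁ → ℝ) (v : Fin d₂ → ℝ) (t : ℝ)
    (ηr : Fin r₁ → ℝ) (ηc : Fin r₂ → ℝ)
    (hCI : CondIndepBdd μ
      (MeasurableSpace.comap (fun ω => Uᵀ * X ω * V) inferInstance) Y X)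
    (hbilin : μ[fun ω => bilin u (X ω) v |
        MeasurableSpace.comap (fun ω => Uᵀ * X ω * V) inferInstance]
      =ᵐ[μ] fun ω => bilin (U.mulVec ηr) (X ω) (V.mulVec ηc))
    (hpos : 0 < ∫ ω, (bilin u (X ω) v
        - (μ[fun ω' => bilin u (X ω') v |
            MeasurableSpace.comap (fun ω' => Uᵀ * X ω' * V) inferInstance]) ω) ^ 2 ∂μ) :
    PSMMobj μ X (sliceLabel A₁ A₂ Y) lam (U.mulVec ηr) (V.mulVec ηc) t
      < PSMMobj μ X (sliceLabel A₁ A₂ Y) lam u v t := by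
  classical
  simp only [PSMMobj]
  set T : Ω → Matrix (Fin r₁) (Fin r₂) ℝ := fun ω => Uᵀ * X ω * V with hT
  have hmfold : MeasurableSpace.comap T inferInstance = mSig T := rfl
  rw [hmfold] at hCI hbilin hpos
  set B : Ω → ℝ := fun ω => bilin u (X ω) v with hB
  set Bs : Ω → ℝ := fun ω => bilin (U.mulVec ηr) (X ω) (V.mulVec ηc) with hBs
  show variance Bs μ + lam * ∫ ω, max (1 - sliceLabel A₁ A₂ Y ω * (Bs ω - t)) 0 ∂μ
      < variance B μ + lam * ∫ ω, max (1 - sliceLabel A₁ A₂ Y ω * (B ω - t)) 0 ∂μ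
  have hTmeas : Measurable T := (measurable_conj U V).comp hX
  have hm : mSig T ≤ ‹MeasurableSpace Ω› := hTmeas.comap_le
  have hTm : Measurable[mSig T] T := Measurable.of_comap_le le_rfl
  have hBmeas : Measurable B := (measurable_bilin u v).comp hX
  have hBsmeas : Measurable Bs := (measurable_bilin _ _).comp hX
  have hBL2 : MemLp B 2 μ := memℒp_bilin hXL2 u v
  have hBsL2 : MemLp Bs 2 μ := memℒp_bilin hXL2 _ _
  have hBint : Integrable B μ := hBL2.integrable one_le_two
  have hBsint : Integrable Bs μ := hBsL2.integrable one_le_two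
  have hintB : ∫ ω, B ω ∂μ = 0 := integral_bilin hXL2 hXmean u v
  have hintBs : ∫ ω, Bs ω ∂μ = 0 := integral_bilin hXL2 hXmean _ _
  have hTBs : ∀ ω, bilin ηr (T ω) ηc = Bs ω := fun ω => (bilin_mulVec U V ηr ηc (X ω)).symm
  have hBsm : StronglyMeasurable[mSig T] Bs := by
    have : Bs = fun ω => bilin ηr (T ω) ηc := funext fun ω => (hTBs ω).symm
    rw [this]
    exact ((measurable_bilin ηr ηc).comp hTm).stronglyMeasurable
  -- ### Variance part
  have hBBs : ∫ ω, Bs ω * B ω ∂μ = ∫ ω, Bs ω * Bs ω ∂μ := by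
    have hint : Integrable (Bs * B) μ := memℒp2_integrable_mul hBsL2 hBL2
    have hpull := condExp_mul_of_stronglyMeasurable_left (μ := μ) hBsm hint hBint
    calc ∫ ω, Bs ω * B ω ∂μ = ∫ ω, (Bs * B) ω ∂μ := by simp only [Pi.mul_apply]
      _ = ∫ ω, (μ[Bs * B|mSig T]) ω ∂μ := (integral_condExp (f := Bs * B) hm).symm
      _ = ∫ ω, (Bs * μ[B|mSig T]) ω ∂μ := integral_congr_ae hpull
      _ = ∫ ω, Bs ω * Bs ω ∂μ := by
          refine integral_congr_ae ?_
          filter_upwards [hbilin] with ω hω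
          simp only [Pi.mul_apply, hω]
  have hsq : ∫ ω, (B ω - Bs ω) ^ 2 ∂μ = (∫ ω, B ω ^ 2 ∂μ) - ∫ ω, Bs ω ^ 2 ∂μ := by
    have h1 : Integrable (fun ω => B ω ^ 2) μ := hBL2.integrable_sq
    have h2 : Integrable (fun ω => Bs ω ^ 2) μ := hBsL2.integrable_sq
    have h3 : Integrable (fun ω => Bs ω * B ω) μ := memℒp2_integrable_mul hBsL2 hBL2
    have hf' : Integrable (fun ω => B ω ^ 2 - 2 * (Bs ω * B ω)) μ := h1.sub (h3.const_mul 2)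
    have e : (fun ω => (B ω - Bs ω) ^ 2)
        = fun ω => (B ω ^ 2 - 2 * (Bs ω * B ω)) + Bs ω ^ 2 := by funext ω; ring
    rw [e, integral_add hf' h2, integral_sub h1 (h3.const_mul 2),
      integral_const_mul, hBBs]
    ring
  have hposBBs : 0 < ∫ ω, (B ω - Bs ω) ^ 2 ∂μ := by
    refine lt_of_lt_of_eq hpos (integral_congr_ae ?_)
    filter_upwards [hbilin] with ω hω
    rw [hω]
  have hvar : variance Bs μ < variance B μ := by
    rw [variance_eq_sub hBL2, variance_eq_sub hBsL2]
    simp only [Pi.pow_apply]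
    rw [hintB, hintBs]
    norm_num
    linarith [hsq, hposBBs]
  -- ### bounds for indicators
  have hind01 : ∀ (A : Set ℝ) (s : ℝ), 0 ≤ A.indicator (1 : ℝ → ℝ) s
      ∧ A.indicator (1 : ℝ → ℝ) s ≤ 1 := by
    intro A s
    by_cases h : s ∈ A <;>
      simp [Set.indicator_of_mem, Set.indicator_of_notMem, h]
  -- ### Key hinge inequality
  have key : ∀ (g : ℝ → ℝ), Measurable g → (∀ s, 0 ≤ g s) → (∀ s, g s ≤ 1) → ∀ a b : ℝ,
      ∫ ω, g (Y ω) * max (a + b * Bs ω) 0 ∂μ ≤ ∫ ω, g (Y ω) * max (a + b * B ω) 0 ∂μ := by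
    intro g hg hg0 hg1 a b
    have hgbd : ∀ x, |g x| ≤ 1 := fun x => abs_le.2 ⟨by linarith [hg0 x], hg1 x⟩
    have hgY : Measurable fun ω => g (Y ω) := hg.comp hY
    have hgYint : Integrable (fun ω => g (Y ω)) μ :=
      integrable_of_bdd hgY fun ω => hgbd (Y ω)
    set E : Set (Matrix (Fin r₁) (Fin r₂) ℝ) := {N | 0 ≤ a + b * bilin ηr N ηc} with hEdef
    have hE : MeasurableSet E := measurableSet_le measurable_const
      (measurable_const.add ((measurable_bilin ηr ηc).const_mul b))
    set χ : Ω → ℝ := fun ω => E.indicator (fun _ => (1 : ℝ)) (T ω) with hχdef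
    have hχmeas : Measurable χ := (measurable_const.indicator hE).comp hTmeas
    have hχm : StronglyMeasurable[mSig T] χ :=
      ((measurable_const.indicator hE).comp hTm).stronglyMeasurable
    have hχ_cases : ∀ ω, (χ ω = 1 ∧ 0 ≤ a + b * Bs ω) ∨ (χ ω = 0 ∧ a + b * Bs ω < 0) := by
      intro ω
      by_cases hmem : T ω ∈ E
      · left
        refine ⟨by simp [hχdef, Set.indicator_of_mem hmem], ?_⟩
        have h' : 0 ≤ a + b * bilin ηr (T ω) ηc := hmem
        rwa [hTBs ω] at h'
      · right
        refine ⟨by simp [hχdef, Set.indicator_of_notMem hmem], ?_⟩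
        have h' : ¬(0 ≤ a + b * bilin ηr (T ω) ηc) := hmem
        rw [hTBs ω] at h'
        exact not_le.mp h'
    have hχ0 : ∀ ω, 0 ≤ χ ω := fun ω => by
      rcases hχ_cases ω with ⟨h, _⟩ | ⟨h, _⟩ <;> rw [h] <;> norm_num
    have hχ1 : ∀ ω, χ ω ≤ 1 := fun ω => by
      rcases hχ_cases ω with ⟨h, _⟩ | ⟨h, _⟩ <;> rw [h] <;> norm_num
    have hχbd : ∀ ω, |χ ω| ≤ 1 := fun ω => abs_le.2 ⟨by linarith [hχ0 ω], hχ1 ω⟩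
    -- clamping
    have hclamp_meas : ∀ n : ℕ, Measurable fun x : ℝ => max (min x n) (-(n : ℝ)) := fun n =>
      (measurable_id.min measurable_const).max measurable_const
    have hclamp_absle : ∀ (n : ℕ) (x : ℝ), |max (min x n) (-(n : ℝ))| ≤ |x| := by
      intro n x
      refine abs_le.2 ⟨?_, ?_⟩
      · exact le_max_of_le_left (le_min (neg_abs_le x)
          (le_trans (neg_nonpos.mpr (abs_nonneg x)) (Nat.cast_nonneg n)))
      · exact max_le ((min_le_left _ _).trans (le_abs_self x))
          ((neg_nonpos.mpr (Nat.cast_nonneg n)).trans (abs_nonneg x))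
    have hclamp_bd : ∀ (n : ℕ) (x : ℝ), |max (min x n) (-(n : ℝ))| ≤ n := by
      intro n x
      refine abs_le.2 ⟨le_max_right _ _, max_le (min_le_right _ _)
        (neg_le_self (Nat.cast_nonneg n))⟩
    have hclamp_tendsto : ∀ x : ℝ, Filter.Tendsto (fun n : ℕ => max (min x n) (-(n : ℝ)))
        Filter.atTop (nhds x) := by
      intro x
      have hev : (fun n : ℕ => max (min x n) (-(n : ℝ))) =ᶠ[Filter.atTop] fun _ => x := by
        filter_upwards [Filter.eventually_ge_atTop ⌈|x|⌉₊] with n hn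
        have hxn : |x| ≤ (n : ℝ) := le_trans (Nat.le_ceil _) (Nat.cast_le.2 hn)
        have h1 : x ≤ n := (le_abs_self x).trans hxn
        have h2 : -(n : ℝ) ≤ x := by
          have := neg_abs_le x
          linarith
        rw [min_eq_left h1, max_eq_left h2]
      exact tendsto_const_nhds.congr' hev.symm
    set Φ : Ω → ℝ := μ[fun ω => g (Y ω)|mSig T] with hΦdef
    have hΦm : StronglyMeasurable[mSig T] Φ := stronglyMeasurable_condExp
    have hΦbdd : ∀ᵐ ω ∂μ, |Φ ω| ≤ 1 := by
      have := ae_bdd_condExp_of_ae_bdd (m := mSig T) (μ := μ) (R := 1)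
        (Filter.Eventually.of_forall fun ω => by simpa using hgbd (Y ω))
      simpa using this
    have hΦint : Integrable Φ μ := integrable_condExp
    have hΦaesm : AEStronglyMeasurable Φ μ := (hΦm.mono hm).aestronglyMeasurable
    have hΦnorm : ∀ᵐ ω ∂μ, ‖Φ ω‖ ≤ 1 := by
      filter_upwards [hΦbdd] with ω hω
      simpa [Real.norm_eq_abs] using hω
    -- Step A : for each truncation level the two integrals agree
    have stepA : ∀ n : ℕ, ∫ ω, g (Y ω) * (χ ω * max (min (B ω) n) (-(n : ℝ))) ∂μ
        = ∫ ω, Φ ω * (χ ω * max (min (B ω) n) (-(n : ℝ))) ∂μ := by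
      intro n
      set h : Matrix (Fin d₁) (Fin d₂) ℝ → ℝ :=
        fun M => E.indicator (fun _ => (1 : ℝ)) (Uᵀ * M * V)
          * max (min (bilin u M v) n) (-(n : ℝ)) with hhdef
      have hhX : ∀ ω, h (X ω) = χ ω * max (min (B ω) n) (-(n : ℝ)) := fun ω => rfl
      have hhmeas : Measurable h := by
        refine Measurable.mul ?_ ?_
        · exact (measurable_const.indicator hE).comp (measurable_conj U V)
        · exact (hclamp_meas n).comp (measurable_bilin u v)
      have hindbd : ∀ N : Matrix (Fin r₁) (Fin r₂) ℝ,
          |E.indicator (fun _ => (1 : ℝ)) N| ≤ 1 := by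
        intro N
        by_cases hN : N ∈ E <;>
          simp [Set.indicator_of_mem, Set.indicator_of_notMem, hN]
      have hhbd : ∀ M, |h M| ≤ n := by
        intro M
        rw [hhdef]
        calc |E.indicator (fun _ => (1 : ℝ)) (Uᵀ * M * V) * max (min (bilin u M v) n) (-(n : ℝ))|
            = |E.indicator (fun _ => (1 : ℝ)) (Uᵀ * M * V)|
              * |max (min (bilin u M v) n) (-(n : ℝ))| := abs_mul _ _
          _ ≤ 1 * n := mul_le_mul (hindbd _) (hclamp_bd n _) (abs_nonneg _) zero_le_one
          _ = n := one_mul _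
      have hCIn := hCI g h hg hhmeas ⟨1, hgbd⟩ ⟨n, hhbd⟩
      have hhXmeas : Measurable fun ω => h (X ω) := hhmeas.comp hX
      have hhXint : Integrable (fun ω => h (X ω)) μ :=
        integrable_of_bdd hhXmeas fun ω => hhbd (X ω)
      have e1 : ∫ ω, g (Y ω) * h (X ω) ∂μ
          = ∫ ω, Φ ω * (μ[fun ω' => h (X ω')|mSig T]) ω ∂μ := by
        calc ∫ ω, g (Y ω) * h (X ω) ∂μ
            = ∫ ω, (μ[fun ω' => g (Y ω') * h (X ω')|mSig T]) ω ∂μ :=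
              (integral_condExp (f := fun ω' => g (Y ω') * h (X ω')) hm).symm
          _ = ∫ ω, Φ ω * (μ[fun ω' => h (X ω')|mSig T]) ω ∂μ := integral_congr_ae hCIn
      have hint2 : Integrable (Φ * fun ω => h (X ω)) μ :=
        hhXint.bdd_mul hΦaesm hΦnorm
      have hpull := condExp_mul_of_stronglyMeasurable_left (μ := μ) hΦm hint2 hhXint
      have e2 : ∫ ω, Φ ω * (μ[fun ω' => h (X ω')|mSig T]) ω ∂μ = ∫ ω, Φ ω * h (X ω) ∂μ := by
        calc ∫ ω, Φ ω * (μ[fun ω' => h (X ω')|mSig T]) ω ∂μ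
            = ∫ ω, (μ[Φ * fun ω' => h (X ω')|mSig T]) ω ∂μ := (integral_congr_ae hpull).symm
          _ = ∫ ω, (Φ * fun ω' => h (X ω')) ω ∂μ :=
              integral_condExp (f := Φ * fun ω' => h (X ω')) hm
          _ = ∫ ω, Φ ω * h (X ω) ∂μ := rfl
      calc ∫ ω, g (Y ω) * (χ ω * max (min (B ω) n) (-(n : ℝ))) ∂μ
          = ∫ ω, g (Y ω) * h (X ω) ∂μ := by
            refine integral_congr_ae (Filter.Eventually.of_forall fun ω => ?_)
            simp only [hhX]
        _ = ∫ ω, Φ ω * h (X ω) ∂μ := e1.trans e2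
        _ = ∫ ω, Φ ω * (χ ω * max (min (B ω) n) (-(n : ℝ))) ∂μ := by
            refine integral_congr_ae (Filter.Eventually.of_forall fun ω => ?_)
            simp only [hhX]
    -- Step B : pass to the limit
    have hint_χB : Integrable (fun ω => χ ω * B ω) μ :=
      hBint.bdd_mul hχmeas.aestronglyMeasurable
        (Filter.Eventually.of_forall fun ω => by simpa [Real.norm_eq_abs] using hχbd ω)
    have hint_gχB : Integrable (fun ω => g (Y ω) * (χ ω * B ω)) μ :=
      hint_χB.bdd_mul hgY.aestronglyMeasurable
        (Filter.Eventually.of_forall fun ω => by simpa [Real.norm_eq_abs] using hgbd (Y ω))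
    have hint_ΦχB : Integrable (fun ω => Φ ω * (χ ω * B ω)) μ :=
      hint_χB.bdd_mul hΦaesm hΦnorm
    have hbound : ∀ (c : Ω → ℝ), (∀ᵐ ω ∂μ, |c ω| ≤ 1) → ∀ n : ℕ,
        ∀ᵐ ω ∂μ, ‖c ω * (χ ω * max (min (B ω) n) (-(n : ℝ)))‖ ≤ |B ω| := by
      intro c hc n
      filter_upwards [hc] with ω hω
      rw [Real.norm_eq_abs, abs_mul, abs_mul]
      calc |c ω| * (|χ ω| * |max (min (B ω) n) (-(n : ℝ))|)
          ≤ 1 * (1 * |B ω|) := by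
            refine mul_le_mul hω (mul_le_mul (hχbd ω) (hclamp_absle n (B ω)) (abs_nonneg _)
              zero_le_one) (mul_nonneg (abs_nonneg _) (abs_nonneg _)) zero_le_one
        _ = |B ω| := by ring
    have hlimpt : ∀ (c : Ω → ℝ), ∀ᵐ ω ∂μ, Filter.Tendsto
        (fun n : ℕ => c ω * (χ ω * max (min (B ω) n) (-(n : ℝ)))) Filter.atTop
        (nhds (c ω * (χ ω * B ω))) := by
      intro c
      refine Filter.Eventually.of_forall fun ω => ?_
      exact ((hclamp_tendsto (B ω)).const_mul (χ ω)).const_mul (c ω)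
    have limL : Filter.Tendsto
        (fun n : ℕ => ∫ ω, g (Y ω) * (χ ω * max (min (B ω) n) (-(n : ℝ))) ∂μ)
        Filter.atTop (nhds (∫ ω, g (Y ω) * (χ ω * B ω) ∂μ)) := by
      refine tendsto_integral_of_dominated_convergence (fun ω => |B ω|) ?_ ?_ ?_ ?_
      · intro n
        exact (hgY.mul (hχmeas.mul ((hclamp_meas n).comp hBmeas))).aestronglyMeasurable
      · exact hBint.abs
      · exact hbound _ (Filter.Eventually.of_forall fun ω => hgbd (Y ω))
      · exact hlimpt _
    have limR : Filter.Tendsto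
        (fun n : ℕ => ∫ ω, Φ ω * (χ ω * max (min (B ω) n) (-(n : ℝ))) ∂μ)
        Filter.atTop (nhds (∫ ω, Φ ω * (χ ω * B ω) ∂μ)) := by
      refine tendsto_integral_of_dominated_convergence (fun ω => |B ω|) ?_ ?_ ?_ ?_
      · intro n
        exact hΦaesm.mul (hχmeas.mul ((hclamp_meas n).comp hBmeas)).aestronglyMeasurable
      · exact hBint.abs
      · exact hbound _ hΦbdd
      · exact hlimpt _
    have eqn : ∫ ω, g (Y ω) * (χ ω * B ω) ∂μ = ∫ ω, Φ ω * (χ ω * B ω) ∂μ :=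
      tendsto_nhds_unique limL (limR.congr fun n => (stepA n).symm)
    -- Step C : replace B by Bs inside the Φ-integral
    have hΦχm : StronglyMeasurable[mSig T] fun ω => Φ ω * χ ω := hΦm.mul hχm
    have hint_ΦχB' : Integrable ((fun ω => Φ ω * χ ω) * B) μ := by
      have he : ((fun ω => Φ ω * χ ω) * B) = fun ω => Φ ω * (χ ω * B ω) := by
        funext ω
        simp [mul_assoc]
      rw [he]
      exact hint_ΦχB
    have stepC : ∫ ω, Φ ω * (χ ω * B ω) ∂μ = ∫ ω, Φ ω * (χ ω * Bs ω) ∂μ := by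
      have hpull := condExp_mul_of_stronglyMeasurable_left (μ := μ) hΦχm hint_ΦχB' hBint
      calc ∫ ω, Φ ω * (χ ω * B ω) ∂μ
          = ∫ ω, ((fun ω' => Φ ω' * χ ω') * B) ω ∂μ := by
            refine integral_congr_ae (Filter.Eventually.of_forall fun ω => ?_)
            simp [mul_assoc]
        _ = ∫ ω, (μ[(fun ω' => Φ ω' * χ ω') * B|mSig T]) ω ∂μ :=
            (integral_condExp (f := (fun ω' => Φ ω' * χ ω') * B) hm).symm
        _ = ∫ ω, ((fun ω' => Φ ω' * χ ω') * μ[B|mSig T]) ω ∂μ := integral_congr_ae hpull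
        _ = ∫ ω, Φ ω * (χ ω * Bs ω) ∂μ := by
            refine integral_congr_ae ?_
            filter_upwards [hbilin] with ω hω
            simp only [Pi.mul_apply, hω, mul_assoc]
    -- Step D : the same replacement for the g-integral, backwards
    have hχBs_m : StronglyMeasurable[mSig T] fun ω => χ ω * Bs ω := hχm.mul hBsm
    have hint_χBs : Integrable (fun ω => χ ω * Bs ω) μ :=
      hBsint.bdd_mul hχmeas.aestronglyMeasurable
        (Filter.Eventually.of_forall fun ω => by simpa [Real.norm_eq_abs] using hχbd ω)
    have hint_gχBs : Integrable (fun ω => g (Y ω) * (χ ω * Bs ω)) μ :=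
      hint_χBs.bdd_mul hgY.aestronglyMeasurable
        (Filter.Eventually.of_forall fun ω => by simpa [Real.norm_eq_abs] using hgbd (Y ω))
    have hint_χBsgY : Integrable ((fun ω => χ ω * Bs ω) * fun ω => g (Y ω)) μ := by
      have he : ((fun ω => χ ω * Bs ω) * fun ω => g (Y ω))
          = fun ω => g (Y ω) * (χ ω * Bs ω) := by
        funext ω
        simp [Pi.mul_apply]
        ring
      rw [he]
      exact hint_gχBs
    have stepD : ∫ ω, g (Y ω) * (χ ω * Bs ω) ∂μ = ∫ ω, Φ ω * (χ ω * Bs ω) ∂μ := by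
      have hpull := condExp_mul_of_stronglyMeasurable_left (μ := μ) hχBs_m hint_χBsgY hgYint
      calc ∫ ω, g (Y ω) * (χ ω * Bs ω) ∂μ
          = ∫ ω, ((fun ω' => χ ω' * Bs ω') * fun ω' => g (Y ω')) ω ∂μ := by
            refine integral_congr_ae (Filter.Eventually.of_forall fun ω => ?_)
            simp only [Pi.mul_apply]
            ring
        _ = ∫ ω, (μ[(fun ω' => χ ω' * Bs ω') * fun ω' => g (Y ω')|mSig T]) ω ∂μ :=
            (integral_condExp (f := (fun ω' => χ ω' * Bs ω') * fun ω' => g (Y ω')) hm).symm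
        _ = ∫ ω, ((fun ω' => χ ω' * Bs ω') * μ[fun ω' => g (Y ω')|mSig T]) ω ∂μ :=
            integral_congr_ae hpull
        _ = ∫ ω, Φ ω * (χ ω * Bs ω) ∂μ := by
            refine integral_congr_ae (Filter.Eventually.of_forall fun ω => ?_)
            simp only [Pi.mul_apply, hΦdef]
            ring
    have keyEq : ∫ ω, g (Y ω) * (χ ω * B ω) ∂μ = ∫ ω, g (Y ω) * (χ ω * Bs ω) ∂μ := by
      rw [eqn, stepC, ← stepD]
    -- pointwise facts
    have hRHSeq : ∀ ω, g (Y ω) * max (a + b * Bs ω) 0 = g (Y ω) * (χ ω * (a + b * Bs ω)) := by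
      intro ω
      rcases hχ_cases ω with ⟨h1, h2⟩ | ⟨h1, h2⟩ <;> rw [h1]
      · rw [max_eq_left h2]
        ring
      · rw [max_eq_right h2.le]
        ring
    have hLHSge : ∀ ω, g (Y ω) * (χ ω * (a + b * B ω)) ≤ g (Y ω) * max (a + b * B ω) 0 := by
      intro ω
      refine mul_le_mul_of_nonneg_left ?_ (hg0 _)
      rcases hχ_cases ω with ⟨h1, _⟩ | ⟨h1, _⟩ <;> rw [h1]
      · rw [one_mul]
        exact le_max_left _ _
      · rw [zero_mul]
        exact le_max_right _ _
    have hgχint : Integrable (fun ω => g (Y ω) * χ ω) μ := by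
      refine integrable_of_bdd (hgY.mul hχmeas) (C := 1) fun ω => ?_
      rw [abs_mul]
      calc |g (Y ω)| * |χ ω| ≤ 1 * 1 :=
          mul_le_mul (hgbd _) (hχbd _) (abs_nonneg _) zero_le_one
        _ = 1 := one_mul 1
    have expand : ∀ (Z : Ω → ℝ), Integrable (fun ω => g (Y ω) * (χ ω * Z ω)) μ →
        ∫ ω, g (Y ω) * (χ ω * (a + b * Z ω)) ∂μ
          = a * (∫ ω, g (Y ω) * χ ω ∂μ) + b * ∫ ω, g (Y ω) * (χ ω * Z ω) ∂μ := by
      intro Z hZ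
      have he : (fun ω => g (Y ω) * (χ ω * (a + b * Z ω)))
          = fun ω => a * (g (Y ω) * χ ω) + b * (g (Y ω) * (χ ω * Z ω)) := by
        funext ω
        ring
      rw [he, integral_add (hgχint.const_mul a) (hZ.const_mul b), integral_const_mul,
        integral_const_mul]
    have hmaxBint : Integrable (fun ω => g (Y ω) * max (a + b * B ω) 0) μ := by
      refine Integrable.mono' ((integrable_const |a|).add (hBint.abs.const_mul |b|))
        (hgY.mul ((measurable_const.add (hBmeas.const_mul b)).max
          measurable_const)).aestronglyMeasurable
        (Filter.Eventually.of_forall fun ω => ?_)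
      rw [Real.norm_eq_abs, abs_mul]
      have h1 : |max (a + b * B ω) 0| ≤ |a + b * B ω| := by
        rcases le_total (a + b * B ω) 0 with h | h
        · rw [max_eq_right h]
          simp [abs_nonneg]
        · rw [max_eq_left h]
      calc |g (Y ω)| * |max (a + b * B ω) 0| ≤ 1 * |a + b * B ω| :=
          mul_le_mul (hgbd _) h1 (abs_nonneg _) zero_le_one
        _ = |a + b * B ω| := one_mul _
        _ ≤ |a| + |b| * |B ω| := by
            calc |a + b * B ω| ≤ |a| + |b * B ω| := abs_add_le _ _
              _ = |a| + |b| * |B ω| := by rw [abs_mul]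
    have hgχaBint : Integrable (fun ω => g (Y ω) * (χ ω * (a + b * B ω))) μ := by
      have he : (fun ω => g (Y ω) * (χ ω * (a + b * B ω)))
          = fun ω => a * (g (Y ω) * χ ω) + b * (g (Y ω) * (χ ω * B ω)) := by
        funext ω
        ring
      rw [he]
      exact (hgχint.const_mul a).add (hint_gχB.const_mul b)
    calc ∫ ω, g (Y ω) * max (a + b * Bs ω) 0 ∂μ
        = ∫ ω, g (Y ω) * (χ ω * (a + b * Bs ω)) ∂μ :=
          integral_congr_ae (Filter.Eventually.of_forall hRHSeq)
      _ = a * (∫ ω, g (Y ω) * χ ω ∂μ) + b * ∫ ω, g (Y ω) * (χ ω * Bs ω) ∂μ :=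
          expand Bs hint_gχBs
      _ = a * (∫ ω, g (Y ω) * χ ω ∂μ) + b * ∫ ω, g (Y ω) * (χ ω * B ω) ∂μ := by rw [keyEq]
      _ = ∫ ω, g (Y ω) * (χ ω * (a + b * B ω)) ∂μ := (expand B hint_gχB).symm
      _ ≤ ∫ ω, g (Y ω) * max (a + b * B ω) 0 ∂μ :=
          integral_mono hgχaBint hmaxBint hLHSge
  -- ### hinge decomposition
  have hdecomp : ∀ (Z : Ω → ℝ) (ω : Ω), max (1 - sliceLabel A₁ A₂ Y ω * (Z ω - t)) 0
      = (1 - A₁.indicator 1 (Y ω) - A₂.indicator 1 (Y ω))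
        + A₁.indicator 1 (Y ω) * max ((1 + t) + (-1) * Z ω) 0
        + A₂.indicator 1 (Y ω) * max ((1 - t) + 1 * Z ω) 0 := by
    intro Z ω
    unfold sliceLabel
    by_cases h1 : Y ω ∈ A₁
    · have h2 : Y ω ∉ A₂ := fun h2 => Set.disjoint_left.mp hdisj h1 h2
      simp only [Set.indicator_of_mem h1, Set.indicator_of_notMem h2, Pi.one_apply]
      rw [show (1 : ℝ) - (1 - 0) * (Z ω - t) = (1 + t) + (-1) * Z ω from by ring]
      ring
    · by_cases h2 : Y ω ∈ A₂
      · simp only [Set.indicator_of_mem h2, Set.indicator_of_notMem h1, Pi.one_apply]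
        rw [show (1 : ℝ) - (0 - 1) * (Z ω - t) = (1 - t) + 1 * Z ω from by ring]
        ring
      · simp only [Set.indicator_of_notMem h1, Set.indicator_of_notMem h2]
        norm_num
  have hmaxint : ∀ (Z : Ω → ℝ), Measurable Z → Integrable Z μ →
      ∀ (A : Set ℝ), MeasurableSet A → ∀ a b : ℝ,
      Integrable (fun ω => A.indicator (1 : ℝ → ℝ) (Y ω) * max (a + b * Z ω) 0) μ := by
    intro Z hZm hZint A hA a b
    refine Integrable.mono' ((integrable_const |a|).add (hZint.abs.const_mul |b|))
      (((measurable_one.indicator hA).comp hY).mul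
        ((measurable_const.add (hZm.const_mul b)).max measurable_const)).aestronglyMeasurable
      (Filter.Eventually.of_forall fun ω => ?_)
    rw [Real.norm_eq_abs, abs_mul]
    have hindbd : |A.indicator (1 : ℝ → ℝ) (Y ω)| ≤ 1 :=
      abs_le.2 ⟨by linarith [(hind01 A (Y ω)).1], (hind01 A (Y ω)).2⟩
    have h1 : |max (a + b * Z ω) 0| ≤ |a + b * Z ω| := by
      rcases le_total (a + b * Z ω) 0 with h | h
      · rw [max_eq_right h]
        simp [abs_nonneg]
      · rw [max_eq_left h]
    calc |A.indicator (1 : ℝ → ℝ) (Y ω)| * |max (a + b * Z ω) 0|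
        ≤ 1 * |a + b * Z ω| := mul_le_mul hindbd h1 (abs_nonneg _) zero_le_one
      _ = |a + b * Z ω| := one_mul _
      _ ≤ |a| + |b| * |Z ω| := by
          calc |a + b * Z ω| ≤ |a| + |b * Z ω| := abs_add_le _ _
            _ = |a| + |b| * |Z ω| := by rw [abs_mul]
  have h0int : Integrable (fun ω => 1 - A₁.indicator (1 : ℝ → ℝ) (Y ω)
      - A₂.indicator (1 : ℝ → ℝ) (Y ω)) μ := by
    refine integrable_of_bdd (C := 3)
      ((measurable_const.sub ((measurable_one.indicator hA₁).comp hY)).sub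
        ((measurable_one.indicator hA₂).comp hY)) fun ω => ?_
    have i1 := hind01 A₁ (Y ω)
    have i2 := hind01 A₂ (Y ω)
    rw [abs_le]
    constructor <;> [skip; skip] <;> nlinarith [i1.1, i1.2, i2.1, i2.2]
  have hingeEq : ∀ (Z : Ω → ℝ), Measurable Z → Integrable Z μ →
      ∫ ω, max (1 - sliceLabel A₁ A₂ Y ω * (Z ω - t)) 0 ∂μ
        = (∫ ω, (1 - A₁.indicator 1 (Y ω) - A₂.indicator 1 (Y ω)) ∂μ)
          + (∫ ω, A₁.indicator 1 (Y ω) * max ((1 + t) + (-1) * Z ω) 0 ∂μ)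
          + ∫ ω, A₂.indicator 1 (Y ω) * max ((1 - t) + 1 * Z ω) 0 ∂μ := by
    intro Z hZm hZint
    have hsum1 : Integrable (fun ω => (1 - A₁.indicator 1 (Y ω) - A₂.indicator 1 (Y ω))
        + A₁.indicator 1 (Y ω) * max ((1 + t) + (-1) * Z ω) 0) μ :=
      h0int.add (hmaxint Z hZm hZint A₁ hA₁ (1 + t) (-1))
    rw [integral_congr_ae (Filter.Eventually.of_forall (hdecomp Z)),
      integral_add hsum1 (hmaxint Z hZm hZint A₂ hA₂ (1 - t) 1),
      integral_add h0int (hmaxint Z hZm hZint A₁ hA₁ (1 + t) (-1))]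
  have hkey1 := key (A₁.indicator 1) (measurable_one.indicator hA₁)
    (fun s => (hind01 A₁ s).1) (fun s => (hind01 A₁ s).2) (1 + t) (-1)
  have hkey2 := key (A₂.indicator 1) (measurable_one.indicator hA₂)
    (fun s => (hind01 A₂ s).1) (fun s => (hind01 A₂ s).2) (1 - t) 1
  have hinge_le : ∫ ω, max (1 - sliceLabel A₁ A₂ Y ω * (Bs ω - t)) 0 ∂μ
      ≤ ∫ ω, max (1 - sliceLabel A₁ A₂ Y ω * (B ω - t)) 0 ∂μ := by
    rw [hingeEq B hBmeas hBint, hingeEq Bs hBsmeas hBsint]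
    linarith [hkey1, hkey2]
  exact add_lt_add_of_lt_of_le hvar (mul_le_mul_of_nonneg_left hinge_le hlam)
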